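/- In a tree T rooted at ρ, the number of rounds needed for any diffusion process to stabilize is at most the diameter of T: for any target set S, if Influenced[S,r] ≠ Influenced[S,r+1] then r ≤ diam(T); hence the minimum target-set size equals min over 0 ≤ r ≤ diam(T) of the minimum size of a set influencing the root at round exactly r and all of T. -/

import Mathlib

set_option linter.unusedVariables false

open Finset

variable {V : Type*} [Fintype V] [DecidableEq V]

/-- `influenced G t lam S r` : set of influenced nodes after round `r`. -/
def influenced (G : SimpleGraph V) [DecidableRel G.Adj] (t : V → ℕ) (lam : ℕ)
    (S : Finset V) : ℕ → Finset V
  | 0 => S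
  | r + 1 =>
    let prev := influenced G t lam S r
    let A := if r + 1 ≤ lam then prev else prev \ influenced G t lam S (r - lam)
    prev ∪ Finset.univ.filter fun v => t v ≤ (G.neighborFinset v ∩ A).card
  termination_by r => r
  decreasing_by all_goals omega

/-- `activeSet G t lam S r` : set of active nodes at round `r`. -/
def activeSet (G : SimpleGraph V) [DecidableRel G.Adj] (t : V → ℕ) (lam : ℕ)
    (S : Finset V) (r : ℕ) : Finset V :=
  if r = 0 then ∅
  else if r ≤ lam then influenced G t lam S (r - 1)
  else influenced G t lam S (r - 1) \ influenced G t lam S (r - 1 - lam)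

def isTargetSet (G : SimpleGraph V) [DecidableRel G.Adj] (t : V → ℕ) (lam : ℕ)
    (S : Finset V) : Prop :=
  ∃ r, influenced G t lam S r = Finset.univ

def pathGraph (n : ℕ) : SimpleGraph (Fin n) where
  Adj i j := i.val + 1 = j.val ∨ j.val + 1 = i.val
  symm := ⟨fun i j h => h.symm⟩
  loopless := ⟨fun i h => by rcases h with h | h <;> omega⟩

instance (n : ℕ) : DecidableRel (pathGraph n).Adj :=
  fun i j => inferInstanceAs (Decidable (i.val + 1 = j.val ∨ j.val + 1 = i.val))

def ringGraph (n : ℕ) : SimpleGraph (Fin n) where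
  Adj i j := i ≠ j ∧ ((i.val + 1) % n = j.val ∨ (j.val + 1) % n = i.val)
  symm := ⟨fun i j h => ⟨h.1.symm, h.2.symm⟩⟩
  loopless := ⟨fun i h => h.1 rfl⟩

instance (n : ℕ) : DecidableRel (ringGraph n).Adj :=
  fun i j => inferInstanceAs (Decidable (_ ∧ (_ ∨ _)))

instance : DecidableRel (⊤ : SimpleGraph V).Adj :=
  fun a b => inferInstanceAs (Decidable (a ≠ b))


section helpers


variable (G : SimpleGraph V) [DecidableRel G.Adj] (t : V → ℕ) (lam : ℕ) (S : Finset V)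

lemma influenced_succ (r : ℕ) : influenced G t lam S (r + 1) =
    influenced G t lam S r ∪ Finset.univ.filter fun v => t v ≤ (G.neighborFinset v ∩
      (if r + 1 ≤ lam then influenced G t lam S r
        else influenced G t lam S r \ influenced G t lam S (r - lam))).card := by
  rw [influenced]

lemma influenced_subset_succ (r : ℕ) :
    influenced G t lam S r ⊆ influenced G t lam S (r + 1) := by
  rw [influenced_succ]; exact subset_union_left

lemma influenced_mono {a b : ℕ} (h : a ≤ b) :
    influenced G t lam S a ⊆ influenced G t lam S b := by
  induction b with
  | zero => simp_all
  | succ b ih =>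
    rcases Nat.lt_or_ge a (b+1) with h' | h'
    · exact (ih (by omega)).trans (influenced_subset_succ G t lam S b)
    · have : a = b + 1 := by omega
      subst this; exact Finset.Subset.refl _

lemma exists_fresh_neighbor (hlam : 1 ≤ lam) (r : ℕ) (v : V)
    (htv : 1 ≤ t v)
    (hv : v ∈ influenced G t lam S (r + 1)) (hv' : v ∉ influenced G t lam S r) :
    ∃ u, G.Adj v u ∧ u ∈ influenced G t lam S r ∧
      (r = 0 ∨ u ∉ influenced G t lam S (r - 1)) := by
  rw [influenced_succ, Finset.mem_union, Finset.mem_filter] at hv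
  rcases hv with hv | hv
  · exact absurd hv hv'
  · have hcard := hv.2
    cases r with
    | zero =>
      rw [if_pos hlam] at hcard
      have hpos : 0 < (G.neighborFinset v ∩ influenced G t lam S 0).card := by omega
      obtain ⟨u, hu⟩ := Finset.card_pos.mp hpos
      rw [Finset.mem_inter, SimpleGraph.mem_neighborFinset] at hu
      exact ⟨u, hu.1, hu.2, Or.inl rfl⟩
    | succ s =>
      rw [influenced_succ, Finset.mem_union, Finset.mem_filter] at hv'
      push_neg at hv'
      have hcard' := hv'.2 (Finset.mem_univ v)
      set A₁ := (if s + 1 + 1 ≤ lam then influenced G t lam S (s+1)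
        else influenced G t lam S (s+1) \ influenced G t lam S (s + 1 - lam)) with hA₁
      set A₀ := (if s + 1 ≤ lam then influenced G t lam S s
        else influenced G t lam S s \ influenced G t lam S (s - lam)) with hA₀
      have hns : ¬ (G.neighborFinset v ∩ A₁ ⊆ G.neighborFinset v ∩ A₀) := by
        intro hsub
        have := Finset.card_le_card hsub
        omega
      rw [Finset.not_subset] at hns
      obtain ⟨u, hu1, hu0⟩ := hns
      rw [Finset.mem_inter, SimpleGraph.mem_neighborFinset] at hu1
      have hu0' : u ∉ A₀ := fun h => hu0 (Finset.mem_inter.mpr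
        ⟨SimpleGraph.mem_neighborFinset _ _ _ |>.mpr hu1.1, h⟩)
      refine ⟨u, hu1.1, ?_, Or.inr ?_⟩
      · -- u ∈ influenced (s+1)
        rcases le_or_gt (s + 1 + 1) lam with h | h
        · rw [hA₁, if_pos h] at hu1; exact hu1.2
        · rw [hA₁, if_neg (by omega)] at hu1; exact (Finset.mem_sdiff.mp hu1.2).1
      · -- u ∉ influenced s  (note (s+1)-1 = s)
        simp only [Nat.add_sub_cancel]
        intro hus
        apply hu0'
        rcases le_or_gt (s + 1) lam with h | h
        · rw [hA₀, if_pos h]; exact hus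
        · rw [hA₀, if_neg (by omega)]
          refine Finset.mem_sdiff.mpr ⟨hus, fun hmem => ?_⟩
          have hmem' : u ∈ influenced G t lam S (s + 1 - lam) :=
            influenced_mono G t lam S (by omega) hmem
          rw [hA₁, if_neg (by omega)] at hu1
          exact (Finset.mem_sdiff.mp hu1.2).2 hmem'

lemma exists_long_path (hlam : 1 ≤ lam) (ht : ∀ v, 1 ≤ t v) :
    ∀ r, ∀ v, v ∈ influenced G t lam S (r + 1) → v ∉ influenced G t lam S r →
    ∃ w, ∃ p : G.Walk v w, p.IsPath ∧ p.length = r + 1 ∧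
      ∀ x ∈ p.support.tail, x ∈ influenced G t lam S r := by
  intro r
  induction r with
  | zero =>
    intro v hv hv'
    obtain ⟨u, hadj, hu, _⟩ := exists_fresh_neighbor G t lam S hlam 0 v (ht v) hv hv'
    refine ⟨u, SimpleGraph.Walk.cons hadj SimpleGraph.Walk.nil, ?_, rfl, ?_⟩
    · rw [SimpleGraph.Walk.cons_isPath_iff]
      refine ⟨SimpleGraph.Walk.IsPath.nil, ?_⟩
      simp only [SimpleGraph.Walk.support_nil, List.mem_singleton]
      rintro rfl; exact hv' hu
    · intro x hx
      simp only [SimpleGraph.Walk.support_cons, SimpleGraph.Walk.support_nil,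
        List.tail_cons, List.mem_singleton] at hx
      subst hx; exact hu
  | succ s ih =>
    intro v hv hv'
    obtain ⟨u, hadj, hu, hu'⟩ :=
      exists_fresh_neighbor G t lam S hlam (s+1) v (ht v) hv hv'
    have hu2 : u ∉ influenced G t lam S s := by
      rcases hu' with h | h
      · omega
      · simpa using h
    obtain ⟨w, p, hp, hlen, hsupp⟩ := ih u hu hu2
    refine ⟨w, SimpleGraph.Walk.cons hadj p, ?_, by simp [hlen], ?_⟩
    · rw [SimpleGraph.Walk.cons_isPath_iff]
      refine ⟨hp, fun hmem => ?_⟩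
      rw [SimpleGraph.Walk.support_eq_cons] at hmem
      rcases List.mem_cons.mp hmem with rfl | hmem
      · exact hv' hu
      · exact hv' (influenced_mono G t lam S (by omega) (hsupp v hmem))
    · intro x hx
      simp only [SimpleGraph.Walk.support_cons, List.tail_cons] at hx
      rw [SimpleGraph.Walk.support_eq_cons] at hx
      rcases List.mem_cons.mp hx with rfl | hx
      · exact hu
      · exact influenced_mono G t lam S (by omega) (hsupp x hx)

lemma fresh_le_diam (hT : G.IsTree) (hlam : 1 ≤ lam) (ht : ∀ v, 1 ≤ t v)
    (r : ℕ) (v : V) (hv : v ∈ influenced G t lam S (r + 1))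
    (hv' : v ∉ influenced G t lam S r) : r + 1 ≤ G.diam := by
  obtain ⟨w, p, hp, hlen, _⟩ := exists_long_path G t lam S hlam ht r v hv hv'
  obtain ⟨q, hq, hqlen⟩ := hT.isConnected.exists_path_of_dist v w
  have : (⟨p, hp⟩ : G.Path v w) = ⟨q, hq⟩ := hT.IsAcyclic.path_unique _ _
  have hdist : G.dist v w = r + 1 := by
    rw [← hqlen, ← hlen]
    exact congrArg SimpleGraph.Walk.length (congrArg Subtype.val this).symm
  have hne : G.ediam ≠ ⊤ := by
    have : Nonempty V := hT.isConnected.nonempty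
    obtain ⟨a, b, hab⟩ := SimpleGraph.exists_edist_eq_ediam_of_finite (G := G)
    rw [← hab]
    exact SimpleGraph.edist_ne_top_iff_reachable.mpr (hT.isConnected a b)
  calc r + 1 = G.dist v w := hdist.symm
    _ ≤ G.diam := SimpleGraph.dist_le_diam hne

end helpers

/-- in a tree, any diffusion process stabilizes within `diam T`
rounds (if the influenced set changes at round `r+1` then `r ≤ diam T`); hence
the minimum target-set size equals the minimum over rounds `0 ≤ r ≤ diam T` of
the minimum size of a set influencing everything whose diffusion influences the
root at round exactly `r`. -/
theorem stmt18 (G : SimpleGraph V) [DecidableRel G.Adj] (hT : G.IsTree)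
    (t : V → ℕ) (ht : ∀ v, 1 ≤ t v ∧ t v ≤ G.degree v)
    (lam : ℕ) (hlam : 1 ≤ lam) (ρ : V) :
    (∀ (S : Finset V) (r : ℕ),
        influenced G t lam S r ≠ influenced G t lam S (r + 1) → r ≤ G.diam) ∧
    sInf { c : ℕ | ∃ S : Finset V, isTargetSet G t lam S ∧ S.card = c }
      = sInf { c : ℕ | ∃ r ≤ G.diam, ∃ S : Finset V, S.card = c ∧
          isTargetSet G t lam S ∧ ρ ∈ influenced G t lam S r ∧
          (r = 0 ∨ ρ ∉ influenced G t lam S (r - 1)) } := by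
  have ht1 : ∀ v, 1 ≤ t v := fun v => (ht v).1
  constructor
  · intro S r hne
    have hsub := influenced_subset_succ G t lam S r
    have hns : ¬ influenced G t lam S (r+1) ⊆ influenced G t lam S r :=
      fun h => hne (Finset.Subset.antisymm hsub h)
    rw [Finset.not_subset] at hns
    obtain ⟨v, hv, hv'⟩ := hns
    have := fresh_le_diam G t lam S hT hlam ht1 r v hv hv'
    omega
  · congr 1
    ext c
    simp only [Set.mem_setOf_eq]
    constructor
    · rintro ⟨S, hS, hc⟩
      have hex : ∃ r, ρ ∈ influenced G t lam S r := by
        obtain ⟨R, hR⟩ := hS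
        exact ⟨R, hR ▸ Finset.mem_univ ρ⟩
      have hspec := Nat.find_spec hex
      set r₀ := Nat.find hex with hr₀
      have hle : r₀ ≤ G.diam := by
        cases hzero : r₀ with
        | zero => omega
        | succ s =>
          have hnot : ρ ∉ influenced G t lam S s := Nat.find_min hex (by omega)
          exact fresh_le_diam G t lam S hT hlam ht1 s ρ (hzero ▸ hspec) hnot
      refine ⟨r₀, hle, S, hc, hS, hspec, ?_⟩
      rcases Nat.eq_zero_or_pos r₀ with h | h
      · exact Or.inl h
      · exact Or.inr (Nat.find_min hex (by omega))
    · rintro ⟨r, _, S, hc, hS, _, _⟩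
      exact ⟨S, hS, hc⟩
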